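/- Covariance matrix of the vector of factorial effect estimators: in a completely randomized 2^K factorial experiment, let τ̂ be the vector indexed by subsets ℓ ⊆ {1,…,K} with entries τ̂_ℓ = 2^{−(K−1)} Σ_z λ_{ℓ,z} p_z, let τ_i be the vector with entries 2^{−(K−1)} Σ_z λ_{ℓ,z} Y_i(z), and let τ = (1/N) Σ_{i=1}^N τ_i. Then the covariance matrix of τ̂ satisfies Cov(τ̂) = 2^{−2(K−1)} Σ_{z ∈ {0,1}^K} (S_z²/N_z) λ̃_z λ̃_z^T − (1/(N(N−1))) Σ_{i=1}^N (τ_i − τ)(τ_i − τ)^T, where λ̃_z is the vector indexed by subsets ℓ with entries λ_{ℓ,z}. -/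

import Mathlib

open Finset

/-- The finset of completely randomized assignments of `N` units to treatments in `J`
with group sizes `Nj`. -/
def assignments (N : ℕ) {J : Type*} [Fintype J] [DecidableEq J] (Nj : J → ℕ) :
    Finset (Fin N → J) :=
  Finset.univ.filter fun T => ∀ j, (Finset.univ.filter fun i => T i = j).card = Nj j

/-- Expectation with respect to the uniform distribution on completely randomized
assignments. -/
noncomputable def expect {N : ℕ} {J : Type*} [Fintype J] [DecidableEq J]
    (Nj : J → ℕ) (f : (Fin N → J) → ℝ) : ℝ :=
  (∑ T ∈ assignments N Nj, f T) / ((assignments N Nj).card : ℝ)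

/-- Variance with respect to the randomization distribution. -/
noncomputable def rvar {N : ℕ} {J : Type*} [Fintype J] [DecidableEq J]
    (Nj : J → ℕ) (f : (Fin N → J) → ℝ) : ℝ :=
  expect Nj fun T => (f T - expect Nj f) ^ 2

/-- Covariance with respect to the randomization distribution. -/
noncomputable def rcov {N : ℕ} {J : Type*} [Fintype J] [DecidableEq J]
    (Nj : J → ℕ) (f g : (Fin N → J) → ℝ) : ℝ :=
  expect Nj fun T => (f T - expect Nj f) * (g T - expect Nj g)

/-- Observed group mean `p_j` of treatment `j` under assignment `T`. -/
noncomputable def pObs {N : ℕ} {J : Type*} [DecidableEq J]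
    (Y : Fin N → J → ℝ) (Nj : J → ℕ) (j : J) (T : Fin N → J) : ℝ :=
  (∑ i ∈ Finset.univ.filter fun i => T i = j, Y i j) / (Nj j : ℝ)

/-- Population mean `P_j`. -/
noncomputable def Pmean {N : ℕ} {J : Type*} (Y : Fin N → J → ℝ) (j : J) : ℝ :=
  (∑ i, Y i j) / (N : ℝ)

/-- Population variance `S_j²`. -/
noncomputable def S2 {N : ℕ} {J : Type*} (Y : Fin N → J → ℝ) (j : J) : ℝ :=
  (∑ i, (Y i j - Pmean Y j) ^ 2) / ((N : ℝ) - 1)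

/-- Variance of unit-level differences `S²_{j-j'}`. -/
noncomputable def S2diff {N : ℕ} {J : Type*} (Y : Fin N → J → ℝ) (j j' : J) : ℝ :=
  (∑ i, (Y i j - Y i j' - (Pmean Y j - Pmean Y j')) ^ 2) / ((N : ℝ) - 1)

/-- Contrast coefficient `λ_{ℓ,z} = Π_{k∈ℓ} (2 z_k - 1)` for a subset `ℓ` of factors and a
treatment `z ∈ {0,1}^K`. -/
def lam {K : ℕ} (ℓ : Finset (Fin K)) (z : Fin K → Bool) : ℝ :=
  ∏ k ∈ ℓ, (if z k then 1 else -1)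

/-- Finite-population factorial effect `τ_ℓ = 2^{-(K-1)} Σ_z λ_{ℓ,z} P_z`. -/
noncomputable def tauFP {N K : ℕ} (Y : Fin N → (Fin K → Bool) → ℝ) (ℓ : Finset (Fin K)) : ℝ :=
  (1 / 2 ^ (K - 1)) * ∑ z, lam ℓ z * Pmean Y z

/-- Unit-level factorial effect `τ_{i,ℓ} = 2^{-(K-1)} Σ_z λ_{ℓ,z} Y_i(z)`. -/
noncomputable def tauUnit {N K : ℕ} (Y : Fin N → (Fin K → Bool) → ℝ) (i : Fin N)
    (ℓ : Finset (Fin K)) : ℝ :=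
  (1 / 2 ^ (K - 1)) * ∑ z, lam ℓ z * Y i z

/-- Plug-in factorial effect estimator `τ̂_ℓ = 2^{-(K-1)} Σ_z λ_{ℓ,z} p_z`. -/
noncomputable def tauHat {N K : ℕ} (Y : Fin N → (Fin K → Bool) → ℝ)
    (Nj : (Fin K → Bool) → ℕ) (ℓ : Finset (Fin K)) (T : Fin N → (Fin K → Bool)) : ℝ :=
  (1 / 2 ^ (K - 1)) * ∑ z, lam ℓ z * pObs Y Nj z T

/-- Variance of unit-level factorial effects `S²_{τ_ℓ}`. -/
noncomputable def S2tau {N K : ℕ} (Y : Fin N → (Fin K → Bool) → ℝ) (ℓ : Finset (Fin K)) : ℝ :=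
  (∑ i, (tauUnit Y i ℓ - tauFP Y ℓ) ^ 2) / ((N : ℝ) - 1)

section CovAux
set_option linter.unusedSectionVars false
variable {N : ℕ} {J : Type*} [Fintype J] [DecidableEq J] {Nj : J → ℕ}

lemma mem_assignments {T : Fin N → J} :
    T ∈ assignments N Nj ↔ ∀ j, (Finset.univ.filter fun i => T i = j).card = Nj j := by
  simp [assignments]

lemma assignments_nonempty (hsum : ∑ j, Nj j = N) :
    (assignments N Nj).Nonempty := by
  have hcard : Fintype.card (Σ j, Fin (Nj j)) = Fintype.card (Fin N) := by
    simp [hsum]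
  let e : (Σ j, Fin (Nj j)) ≃ Fin N := Fintype.equivOfCardEq hcard
  refine ⟨fun i => (e.symm i).1, mem_assignments.2 fun j => ?_⟩
  have h1 : (Finset.univ.filter fun i => (e.symm i).1 = j)
      = Finset.image (fun s : Σ j, Fin (Nj j) => e s)
          (Finset.univ.filter fun s : Σ j, Fin (Nj j) => s.1 = j) := by
    ext i
    simp only [mem_filter, mem_univ, true_and, mem_image]
    constructor
    · intro h; exact ⟨e.symm i, h, by simp⟩
    · rintro ⟨s, hs, rfl⟩; simpa using hs
  have h2 : (Finset.univ.filter fun s : Σ j, Fin (Nj j) => s.1 = j)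
      = Finset.image (Sigma.mk j) Finset.univ := by
    ext s
    simp only [mem_filter, mem_univ, true_and, mem_image]
    constructor
    · rintro rfl; exact ⟨s.2, rfl⟩
    · rintro ⟨b, rfl⟩; rfl
  rw [h1, Finset.card_image_of_injective _ e.injective, h2,
    Finset.card_image_of_injective _ sigma_mk_injective]
  simp

lemma sum_comp_perm (σ : Equiv.Perm (Fin N)) (f : (Fin N → J) → ℝ) :
    ∑ T ∈ assignments N Nj, f (T ∘ σ) = ∑ T ∈ assignments N Nj, f T := by
  have hmem : ∀ (T : Fin N → J), T ∈ assignments N Nj → (T ∘ σ) ∈ assignments N Nj := by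
    intro T hT
    rw [mem_assignments] at hT ⊢
    intro j
    rw [← hT j]
    apply Finset.card_bij (fun i _ => σ i)
    · intro i hi; simp only [mem_filter, mem_univ, true_and] at hi ⊢; exact hi
    · intro a ha b hb h; exact σ.injective h
    · intro b hb
      simp only [mem_filter, mem_univ, true_and, Function.comp] at hb ⊢
      exact ⟨σ.symm b, by simpa using hb, by simp⟩
  refine Finset.sum_nbij' (fun T => T ∘ σ) (fun T => T ∘ σ.symm) ?_ ?_ ?_ ?_ ?_
  · intro T hT; exact hmem T hT
  · intro T hT
    have := hmem (T ∘ σ.symm)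
    -- need T∘σ.symm ∈ assignments
    rw [mem_assignments] at hT ⊢
    intro j
    rw [← hT j]
    apply Finset.card_bij (fun i _ => σ.symm i)
    · intro i hi; simp only [mem_filter, mem_univ, true_and] at hi ⊢; exact hi
    · intro a ha b hb h; exact σ.symm.injective h
    · intro b hb
      simp only [mem_filter, mem_univ, true_and, Function.comp] at hb ⊢
      exact ⟨σ b, by simpa using hb, by simp⟩
  · intro T hT; funext i; simp
  · intro T hT; funext i; simp
  · intro T hT; rfl

lemma moment1 (hN : 0 < N) (i : Fin N) (j : J) :
    ∑ T ∈ assignments N Nj, (if T i = j then (1:ℝ) else 0)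
      = ((assignments N Nj).card : ℝ) * (Nj j) / N := by
  have hswap : ∀ i' : Fin N,
      (∑ T ∈ assignments N Nj, (if T i' = j then (1:ℝ) else 0))
        = ∑ T ∈ assignments N Nj, (if T i = j then (1:ℝ) else 0) := by
    intro i'
    have h := sum_comp_perm (Nj := Nj) (Equiv.swap i i')
      (fun T => if T i = j then (1:ℝ) else 0)
    simpa [Function.comp, Equiv.swap_apply_left] using h
  have hbig : ∑ i' : Fin N, ∑ T ∈ assignments N Nj, (if T i' = j then (1:ℝ) else 0)
      = ((assignments N Nj).card : ℝ) * (Nj j) := by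
    rw [Finset.sum_comm]
    have : ∀ T ∈ assignments N Nj,
        (∑ i' : Fin N, if T i' = j then (1:ℝ) else 0) = (Nj j : ℝ) := by
      intro T hT
      rw [Finset.sum_boole]
      rw [mem_assignments] at hT
      rw [hT j]
    rw [Finset.sum_congr rfl this, Finset.sum_const, nsmul_eq_mul]
  have hN' : (N : ℝ) ≠ 0 := Nat.cast_ne_zero.2 hN.ne'
  have := hbig
  rw [Finset.sum_congr rfl (fun i' _ => hswap i'), Finset.sum_const, card_univ,
    Fintype.card_fin, nsmul_eq_mul] at this
  rw [eq_div_iff hN']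
  linarith [this]
lemma moment2 (hN : 2 ≤ N) {i i' : Fin N} (hne : i ≠ i') (j j' : J) :
    ∑ T ∈ assignments N Nj, (if T i = j then (1:ℝ) else 0) * (if T i' = j' then (1:ℝ) else 0)
      = ((assignments N Nj).card : ℝ) * (Nj j) * ((Nj j' : ℝ) - if j = j' then 1 else 0)
          / ((N : ℝ) * ((N:ℝ) - 1)) := by
  have hN0 : 0 < N := by omega
  have hswap : ∀ i₂ ∈ Finset.univ.erase i,
      (∑ T ∈ assignments N Nj,
          (if T i = j then (1:ℝ) else 0) * (if T i₂ = j' then (1:ℝ) else 0))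
        = ∑ T ∈ assignments N Nj,
            (if T i = j then (1:ℝ) else 0) * (if T i' = j' then (1:ℝ) else 0) := by
    intro i₂ hi₂
    rw [Finset.mem_erase] at hi₂
    have h := sum_comp_perm (Nj := Nj) (Equiv.swap i' i₂)
      (fun T => (if T i = j then (1:ℝ) else 0) * (if T i' = j' then (1:ℝ) else 0))
    have hfix : Equiv.swap i' i₂ i = i := Equiv.swap_apply_of_ne_of_ne hne hi₂.1.symm
    simpa [Function.comp, hfix, Equiv.swap_apply_left] using h
  -- sum over all i₂ in erase i
  have hbig : ∑ i₂ ∈ Finset.univ.erase i, ∑ T ∈ assignments N Nj,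
      (if T i = j then (1:ℝ) else 0) * (if T i₂ = j' then (1:ℝ) else 0)
      = ((assignments N Nj).card : ℝ) * (Nj j) * ((Nj j' : ℝ) - if j = j' then 1 else 0)
          / N := by
    rw [Finset.sum_comm]
    have hinner : ∀ T ∈ assignments N Nj,
        (∑ i₂ ∈ Finset.univ.erase i,
          (if T i = j then (1:ℝ) else 0) * (if T i₂ = j' then (1:ℝ) else 0))
        = (if T i = j then (1:ℝ) else 0) * ((Nj j' : ℝ) - if T i = j' then 1 else 0) := by
      intro T hT
      rw [← Finset.mul_sum]
      congr 1
      have hsub : ∑ i₂ ∈ Finset.univ.erase i, (if T i₂ = j' then (1:ℝ) else 0)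
          = (∑ i₂ : Fin N, if T i₂ = j' then (1:ℝ) else 0) - (if T i = j' then 1 else 0) := by
        rw [eq_sub_iff_add_eq, Finset.sum_erase_add _ _ (Finset.mem_univ i)]
      rw [hsub, Finset.sum_boole]
      rw [mem_assignments] at hT
      rw [hT j']
    rw [Finset.sum_congr rfl hinner]
    have hsplit : ∀ T : Fin N → J,
        (if T i = j then (1:ℝ) else 0) * ((Nj j' : ℝ) - if T i = j' then 1 else 0)
        = (Nj j' : ℝ) * (if T i = j then (1:ℝ) else 0)
            - (if j = j' then (1:ℝ) else 0) * (if T i = j then (1:ℝ) else 0) := by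
      intro T
      by_cases h1 : T i = j
      · by_cases h2 : T i = j'
        · have hjj : j = j' := h1.symm.trans h2
          simp [h1, h2, hjj]
        · have hjj : j ≠ j' := fun h => h2 (h ▸ h1)
          simp [h1, h2, hjj]
      · simp [h1]
    rw [Finset.sum_congr rfl (fun T _ => hsplit T), Finset.sum_sub_distrib,
      ← Finset.mul_sum, ← Finset.mul_sum, moment1 hN0 i j]
    ring
  have hcard : (Finset.univ.erase i).card = N - 1 := by
    rw [Finset.card_erase_of_mem (Finset.mem_univ i), card_univ, Fintype.card_fin]
  rw [Finset.sum_congr rfl hswap, Finset.sum_const, hcard, nsmul_eq_mul] at hbig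
  have hN' : (N : ℝ) ≠ 0 := Nat.cast_ne_zero.2 hN0.ne'
  have hN1 : (N : ℝ) - 1 ≠ 0 := by
    have : (2:ℝ) ≤ N := by exact_mod_cast hN
    linarith
  have hcast : ((N - 1 : ℕ) : ℝ) = (N : ℝ) - 1 := by
    have : 1 ≤ N := by omega
    push_cast [this]; ring
  rw [hcast] at hbig
  field_simp
  field_simp at hbig
  linarith [hbig]
lemma rcov_eq (h : (assignments N Nj).Nonempty) (f g : (Fin N → J) → ℝ) :
    rcov Nj f g = expect Nj (fun T => f T * g T) - expect Nj f * expect Nj g := by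
  have hc : ((assignments N Nj).card : ℝ) ≠ 0 :=
    Nat.cast_ne_zero.2 (Finset.card_pos.2 h).ne'
  unfold rcov _root_.expect
  set c := ((assignments N Nj).card : ℝ)
  set a := (∑ T ∈ assignments N Nj, f T) / c with ha
  set b := (∑ T ∈ assignments N Nj, g T) / c with hb
  have hexp : ∀ T : Fin N → J, (f T - a) * (g T - b)
      = f T * g T - a * g T - b * f T + a * b := fun T => by ring
  rw [Finset.sum_congr rfl fun T _ => hexp T]
  rw [Finset.sum_add_distrib, Finset.sum_sub_distrib, Finset.sum_sub_distrib,
    ← Finset.mul_sum, ← Finset.mul_sum, Finset.sum_const, nsmul_eq_mul]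
  rw [ha, hb]
  field_simp
  ring
lemma pObs_eq (Y : Fin N → J → ℝ) (z : J) (T : Fin N → J) :
    pObs Y Nj z T = (∑ i, (if T i = z then (1:ℝ) else 0) * Y i z) / (Nj z : ℝ) := by
  unfold pObs
  congr 1
  rw [Finset.sum_filter]
  exact Finset.sum_congr rfl fun i _ => by split <;> simp
lemma expect_pObs (hN : 0 < N) (Y : Fin N → J → ℝ) {z : J} (hz : 1 ≤ Nj z)
    (hsum : ∑ j, Nj j = N) :
    expect Nj (pObs Y Nj z) = Pmean Y z := by
  have hc : ((assignments N Nj).card : ℝ) ≠ 0 :=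
    Nat.cast_ne_zero.2 (Finset.card_pos.2 (assignments_nonempty hsum)).ne'
  have hz' : (Nj z : ℝ) ≠ 0 := Nat.cast_ne_zero.2 (by omega)
  have hN' : (N : ℝ) ≠ 0 := Nat.cast_ne_zero.2 hN.ne'
  unfold _root_.expect
  simp only [pObs_eq]
  rw [← Finset.sum_div, Finset.sum_comm]
  have : ∀ i : Fin N, (∑ T ∈ assignments N Nj, (if T i = z then (1:ℝ) else 0) * Y i z)
      = ((assignments N Nj).card : ℝ) * (Nj z) / N * Y i z := by
    intro i
    rw [← Finset.sum_mul, moment1 hN i z]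
  rw [Finset.sum_congr rfl fun i _ => this i, ← Finset.mul_sum]
  unfold Pmean
  field_simp

lemma rcov_pObs (hN : 2 ≤ N) (Y : Fin N → J → ℝ) (hpos : ∀ z, 1 ≤ Nj z)
    (hsum : ∑ j, Nj j = N) (z z' : J) :
    rcov Nj (pObs Y Nj z) (pObs Y Nj z')
      = (if z = z' then S2 Y z / (Nj z : ℝ) else 0)
        - (∑ i, (Y i z - Pmean Y z) * (Y i z' - Pmean Y z')) / (((N:ℝ) - 1) * N) := by
  have hN0 : 0 < N := by omega
  have hc : ((assignments N Nj).card : ℝ) ≠ 0 :=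
    Nat.cast_ne_zero.2 (Finset.card_pos.2 (assignments_nonempty hsum)).ne'
  have hz0 : (Nj z : ℝ) ≠ 0 := Nat.cast_ne_zero.2 (by have := hpos z; omega)
  have hz0' : (Nj z' : ℝ) ≠ 0 := Nat.cast_ne_zero.2 (by have := hpos z'; omega)
  have hNr : (N : ℝ) ≠ 0 := Nat.cast_ne_zero.2 hN0.ne'
  have hN1 : (N : ℝ) - 1 ≠ 0 := by
    have : (2:ℝ) ≤ N := by exact_mod_cast hN
    linarith
  set c : ℝ := ((assignments N Nj).card : ℝ) with hcdef
  set δ : ℝ := if z = z' then 1 else 0 with hδ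
  set Q : ℝ := ∑ i, Y i z * Y i z' with hQ
  set U : ℝ := ∑ i, Y i z with hU
  set U' : ℝ := ∑ i, Y i z' with hU'
  -- diagonal second moment
  have hdiag : ∀ i : Fin N,
      (∑ T ∈ assignments N Nj,
        (if T i = z then (1:ℝ) else 0) * (if T i = z' then (1:ℝ) else 0))
      = δ * (c * (Nj z) / N) := by
    intro i
    by_cases hzz : z = z'
    · subst hzz
      have hind : ∀ T : Fin N → J,
          (if T i = z then (1:ℝ) else 0) * (if T i = z then (1:ℝ) else 0)
          = (if T i = z then (1:ℝ) else 0) := by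
        intro T; split <;> simp
      rw [Finset.sum_congr rfl fun T _ => hind T, moment1 hN0 i z]
      simp [hδ, hcdef]
    · have hind : ∀ T : Fin N → J,
          (if T i = z then (1:ℝ) else 0) * (if T i = z' then (1:ℝ) else 0) = 0 := by
        intro T
        split_ifs with h1 h2
        · exact absurd (h1 ▸ h2) hzz
        · simp
        · simp
        · simp
      rw [Finset.sum_congr rfl fun T _ => hind T]
      simp [hδ, hzz]
  -- main second moment of pObs products
  have hsumT : ∑ T ∈ assignments N Nj, pObs Y Nj z T * pObs Y Nj z' T
      = (δ * (c * (Nj z) / N) * Q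
          + c * (Nj z) * ((Nj z' : ℝ) - δ) / ((N:ℝ) * ((N:ℝ)-1)) * (U * U' - Q))
        / ((Nj z : ℝ) * (Nj z')) := by
    have hprod : ∀ T : Fin N → J, pObs Y Nj z T * pObs Y Nj z' T
        = (∑ i, ∑ i' : Fin N, ((if T i = z then (1:ℝ) else 0) * (if T i' = z' then (1:ℝ) else 0))
            * (Y i z * Y i' z')) / ((Nj z : ℝ) * (Nj z')) := by
      intro T
      rw [pObs_eq, pObs_eq, div_mul_div_comm, Finset.sum_mul_sum]
      congr 1
      refine Finset.sum_congr rfl fun i _ => Finset.sum_congr rfl fun i' _ => by ring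
    rw [Finset.sum_congr rfl fun T _ => hprod T, ← Finset.sum_div]
    congr 1
    rw [Finset.sum_comm]
    have hswap2 : ∀ i : Fin N,
        (∑ T ∈ assignments N Nj, ∑ i' : Fin N,
          ((if T i = z then (1:ℝ) else 0) * (if T i' = z' then (1:ℝ) else 0))
            * (Y i z * Y i' z'))
        = ∑ i' : Fin N, (∑ T ∈ assignments N Nj,
            (if T i = z then (1:ℝ) else 0) * (if T i' = z' then (1:ℝ) else 0))
            * (Y i z * Y i' z') := by
      intro i
      rw [Finset.sum_comm]
      exact Finset.sum_congr rfl fun i' _ => by rw [Finset.sum_mul]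
    rw [Finset.sum_congr rfl fun i _ => hswap2 i]
    have hinner : ∀ i : Fin N,
        (∑ i' : Fin N, (∑ T ∈ assignments N Nj,
            (if T i = z then (1:ℝ) else 0) * (if T i' = z' then (1:ℝ) else 0))
            * (Y i z * Y i' z'))
        = δ * (c * (Nj z) / N) * (Y i z * Y i z')
          + c * (Nj z) * ((Nj z' : ℝ) - δ) / ((N:ℝ) * ((N:ℝ)-1))
            * (Y i z * (U' - Y i z')) := by
      intro i
      rw [← Finset.sum_erase_add _ _ (Finset.mem_univ i), hdiag i]
      have herase : ∀ i' ∈ Finset.univ.erase i,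
          (∑ T ∈ assignments N Nj,
            (if T i = z then (1:ℝ) else 0) * (if T i' = z' then (1:ℝ) else 0))
            * (Y i z * Y i' z')
          = c * (Nj z) * ((Nj z' : ℝ) - δ) / ((N:ℝ) * ((N:ℝ)-1)) * (Y i z * Y i' z') := by
        intro i' hi'
        rw [moment2 hN (Finset.ne_of_mem_erase hi').symm z z']
      rw [Finset.sum_congr rfl herase, ← Finset.mul_sum]
      have hsum' : ∑ i' ∈ Finset.univ.erase i, Y i' z' = U' - Y i z' := by
        rw [eq_sub_iff_add_eq, Finset.sum_erase_add _ _ (Finset.mem_univ i)]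
      have : ∑ i' ∈ Finset.univ.erase i, Y i z * Y i' z' = Y i z * (U' - Y i z') := by
        rw [← Finset.mul_sum, hsum']
      rw [this]
      ring
    rw [Finset.sum_congr rfl fun i _ => hinner i, Finset.sum_add_distrib,
      ← Finset.mul_sum, ← Finset.mul_sum]
    have h1 : ∑ i : Fin N, Y i z * Y i z' = Q := rfl
    have h2 : ∑ i : Fin N, Y i z * (U' - Y i z') = U * U' - Q := by
      have : ∀ i : Fin N, Y i z * (U' - Y i z') = Y i z * U' - Y i z * Y i z' :=
        fun i => by ring
      rw [Finset.sum_congr rfl fun i _ => this i, Finset.sum_sub_distrib,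
        ← Finset.sum_mul]
    rw [h1, h2]
  have hcent : ∑ i, (Y i z - Pmean Y z) * (Y i z' - Pmean Y z') = Q - U * U' / N := by
    have hp : Pmean Y z = U / N := rfl
    have hp' : Pmean Y z' = U' / N := rfl
    have : ∀ i : Fin N, (Y i z - Pmean Y z) * (Y i z' - Pmean Y z')
        = Y i z * Y i z' - (U/N) * Y i z' - (U'/N) * Y i z + (U/N) * (U'/N) := by
      intro i; rw [hp, hp']; ring
    rw [Finset.sum_congr rfl fun i _ => this i, Finset.sum_add_distrib,
      Finset.sum_sub_distrib, Finset.sum_sub_distrib, ← Finset.mul_sum, ← Finset.mul_sum,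
      Finset.sum_const, Finset.card_univ, Fintype.card_fin, nsmul_eq_mul]
    field_simp
    ring
  rw [rcov_eq (assignments_nonempty hsum), expect_pObs hN0 Y (hpos z) hsum,
    expect_pObs hN0 Y (hpos z') hsum]
  unfold _root_.expect
  rw [hsumT]
  have hp : Pmean Y z = U / N := rfl
  have hp' : Pmean Y z' = U' / N := rfl
  rw [hcent, hp, hp']
  by_cases hzz : z = z'
  · subst hzz
    have hδ1 : δ = 1 := by simp [hδ]
    have hS : S2 Y z = (Q - U * U / N) / ((N:ℝ) - 1) := by
      unfold S2
      have : ∑ i, (Y i z - Pmean Y z) ^ 2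
          = ∑ i, (Y i z - Pmean Y z) * (Y i z - Pmean Y z) :=
        Finset.sum_congr rfl fun i _ => by ring
      rw [this, hcent]
    have hUU : U' = U := rfl
    rw [hδ1, hS, if_pos rfl, hUU]
    rw [← hcdef]
    field_simp
    ring
  · have hδ0 : δ = 0 := by simp [hδ, hzz]
    rw [hδ0, if_neg hzz]
    rw [← hcdef]
    field_simp
    ring
lemma expect_fsum {ι : Type*} (s : Finset ι) (h : ι → (Fin N → J) → ℝ) :
    expect Nj (fun T => ∑ x ∈ s, h x T) = ∑ x ∈ s, expect Nj (h x) := by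
  unfold _root_.expect
  rw [Finset.sum_comm, Finset.sum_div]
lemma expect_const_mul (a : ℝ) (h : (Fin N → J) → ℝ) :
    expect Nj (fun T => a * h T) = a * expect Nj h := by
  unfold _root_.expect
  rw [← Finset.mul_sum, mul_div_assoc]
lemma rcov_sum_sum {ι κ : Type*} [Fintype ι] [Fintype κ] (h : (assignments N Nj).Nonempty)
    (a : ι → ℝ) (b : κ → ℝ) (f : ι → (Fin N → J) → ℝ) (g : κ → (Fin N → J) → ℝ) :
    rcov Nj (fun T => ∑ x, a x * f x T) (fun T => ∑ y, b y * g y T)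
      = ∑ x, ∑ y, a x * b y * rcov Nj (f x) (g y) := by
  rw [rcov_eq h]
  have e1 : expect Nj (fun T => (∑ x, a x * f x T) * (∑ y, b y * g y T))
      = ∑ x, ∑ y, a x * b y * expect Nj (fun T => f x T * g y T) := by
    have h0 : (fun T : Fin N → J => (∑ x, a x * f x T) * (∑ y, b y * g y T))
        = fun T => ∑ x, ∑ y, a x * b y * (f x T * g y T) := funext fun T => by
      rw [Finset.sum_mul_sum]
      exact Finset.sum_congr rfl fun x _ => Finset.sum_congr rfl fun y _ => by ring
    rw [h0, expect_fsum]
    refine Finset.sum_congr rfl fun x _ => ?_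
    rw [expect_fsum]
    exact Finset.sum_congr rfl fun y _ => expect_const_mul _ _
  have e2 : expect Nj (fun T => ∑ x, a x * f x T) = ∑ x, a x * expect Nj (f x) := by
    rw [expect_fsum]; exact Finset.sum_congr rfl fun x _ => expect_const_mul _ _
  have e3 : expect Nj (fun T => ∑ y, b y * g y T) = ∑ y, b y * expect Nj (g y) := by
    rw [expect_fsum]; exact Finset.sum_congr rfl fun y _ => expect_const_mul _ _
  rw [e1, e2, e3, Finset.sum_mul_sum, ← Finset.sum_sub_distrib]
  refine Finset.sum_congr rfl fun x _ => ?_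
  rw [← Finset.sum_sub_distrib]
  refine Finset.sum_congr rfl fun y _ => ?_
  rw [rcov_eq h]
  ring

end CovAux

/-- Covariance matrix of the vector of factorial effect estimators:
`Cov(τ̂) = 2^{-2(K-1)} Σ_z (S_z²/N_z) λ̃_z λ̃_zᵀ - (1/(N(N-1))) Σ_i (τ_i - τ)(τ_i - τ)ᵀ`. -/
theorem cov_matrix_tauHat {N K : ℕ} (hN : 2 ≤ N)
    (Y : Fin N → (Fin K → Bool) → ℝ) (Nj : (Fin K → Bool) → ℕ)
    (hpos : ∀ z, 1 ≤ Nj z) (hsum : ∑ z, Nj z = N) :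
    (Matrix.of fun ℓ ℓ' : Finset (Fin K) =>
        rcov Nj (tauHat Y Nj ℓ) (tauHat Y Nj ℓ')) =
      ((1 / 2 ^ (2 * (K - 1)) : ℝ) •
          ∑ z, (S2 Y z / (Nj z : ℝ)) •
            Matrix.vecMulVec (fun ℓ : Finset (Fin K) => lam ℓ z)
              (fun ℓ : Finset (Fin K) => lam ℓ z))
        - (1 / ((N : ℝ) * ((N : ℝ) - 1))) •
            ∑ i, Matrix.vecMulVec (fun ℓ : Finset (Fin K) => tauUnit Y i ℓ - tauFP Y ℓ)
              (fun ℓ : Finset (Fin K) => tauUnit Y i ℓ - tauFP Y ℓ) := by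

  have hne : (assignments N Nj).Nonempty := assignments_nonempty hsum
  have hNr : (N : ℝ) ≠ 0 := Nat.cast_ne_zero.2 (by omega)
  have hN1 : (N : ℝ) - 1 ≠ 0 := by
    have : (2:ℝ) ≤ N := by exact_mod_cast hN
    linarith
  set c0 : ℝ := 1 / 2 ^ (K - 1) with hc0
  set D : (Fin K → Bool) → (Fin K → Bool) → ℝ :=
    fun z z' => ∑ i, (Y i z - Pmean Y z) * (Y i z' - Pmean Y z') with hD
  ext ℓ ℓ'
  simp only [Matrix.of_apply, Matrix.sub_apply, Matrix.smul_apply, Matrix.sum_apply,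
    Matrix.vecMulVec_apply, smul_eq_mul]
  -- LHS
  have hfun : ∀ m : Finset (Fin K),
      tauHat Y Nj m = fun T => ∑ z, (c0 * lam m z) * pObs Y Nj z T := by
    intro m; funext T
    unfold tauHat
    rw [Finset.mul_sum]
    exact Finset.sum_congr rfl fun z _ => by rw [hc0]; ring
  rw [hfun ℓ, hfun ℓ', rcov_sum_sum hne]
  have hterm : ∀ z z' : Fin K → Bool,
      (c0 * lam ℓ z) * (c0 * lam ℓ' z') * rcov Nj (pObs Y Nj z) (pObs Y Nj z')
      = (if z' = z then c0 * c0 * lam ℓ z * lam ℓ' z * (S2 Y z / (Nj z : ℝ)) else 0)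
        - c0 * c0 * lam ℓ z * lam ℓ' z' * D z z' / (((N:ℝ) - 1) * N) := by
    intro z z'
    rw [rcov_pObs hN Y hpos hsum z z']
    by_cases hzz : z = z'
    · subst hzz; rw [if_pos rfl, if_pos rfl]; ring
    · rw [if_neg hzz, if_neg (Ne.symm hzz)]; ring
  rw [Finset.sum_congr rfl fun z _ => Finset.sum_congr rfl fun z' _ => hterm z z']
  have hsplit : ∀ z : Fin K → Bool,
      (∑ z' : Fin K → Bool,
        ((if z' = z then c0 * c0 * lam ℓ z * lam ℓ' z * (S2 Y z / (Nj z : ℝ)) else 0)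
          - c0 * c0 * lam ℓ z * lam ℓ' z' * D z z' / (((N:ℝ) - 1) * N)))
      = c0 * c0 * lam ℓ z * lam ℓ' z * (S2 Y z / (Nj z : ℝ))
        - ∑ z' : Fin K → Bool, c0 * c0 * lam ℓ z * lam ℓ' z' * D z z' / (((N:ℝ) - 1) * N) := by
    intro z
    rw [Finset.sum_sub_distrib, Finset.sum_ite_eq' Finset.univ z
      (fun _ => c0 * c0 * lam ℓ z * lam ℓ' z * (S2 Y z / (Nj z : ℝ)))]
    simp
  rw [Finset.sum_congr rfl fun z _ => hsplit z, Finset.sum_sub_distrib]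
  -- second piece: unit level effects
  have htau : ∀ (i : Fin N) (m : Finset (Fin K)),
      tauUnit Y i m - tauFP Y m = ∑ z, c0 * lam m z * (Y i z - Pmean Y z) := by
    intro i m
    unfold tauUnit tauFP
    rw [← mul_sub, ← Finset.sum_sub_distrib, Finset.mul_sum]
    exact Finset.sum_congr rfl fun z _ => by rw [hc0]; ring
  have hquad : ∑ i, (tauUnit Y i ℓ - tauFP Y ℓ) * (tauUnit Y i ℓ' - tauFP Y ℓ')
      = ∑ z, ∑ z', c0 * c0 * lam ℓ z * lam ℓ' z' * D z z' := by
    have h1 : ∀ i : Fin N, (tauUnit Y i ℓ - tauFP Y ℓ) * (tauUnit Y i ℓ' - tauFP Y ℓ')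
        = ∑ z, ∑ z', c0 * c0 * lam ℓ z * lam ℓ' z'
            * ((Y i z - Pmean Y z) * (Y i z' - Pmean Y z')) := by
      intro i
      rw [htau i ℓ, htau i ℓ', Finset.sum_mul_sum]
      exact Finset.sum_congr rfl fun z _ => Finset.sum_congr rfl fun z' _ => by ring
    rw [Finset.sum_congr rfl fun i _ => h1 i, Finset.sum_comm]
    refine Finset.sum_congr rfl fun z _ => ?_
    rw [Finset.sum_comm]
    refine Finset.sum_congr rfl fun z' _ => ?_
    rw [← Finset.mul_sum]
  rw [hquad]
  have hc02 : c0 * c0 = 1 / 2 ^ (2 * (K - 1)) := by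
    rw [hc0, two_mul, pow_add]
    field_simp
  congr 1
  · rw [Finset.mul_sum]
    refine Finset.sum_congr rfl fun z _ => ?_
    rw [← hc02]; ring
  · rw [Finset.mul_sum]
    refine Finset.sum_congr rfl fun z _ => ?_
    rw [Finset.mul_sum]
    refine Finset.sum_congr rfl fun z' _ => ?_
    ring
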